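/- Let a₊, a₋ > 0 and γ > 1. With I₁, I₂ as above defined on ]0, a₋/a₊[, the function F₂(ρ) = ρ^{(γ-1)/(2(γ+1))} · I₁(ρ)/I₂(ρ) is strictly monotone increasing on ]0, a₋/a₊[. -/

import Mathlib

open Set MeasureTheory intervalIntegral

lemma abs_rpow_int {r : ℝ} (hr : -1 < r) :
    IntervalIntegrable (fun u : ℝ => |u| ^ r) volume 0 1 := by
  rw [intervalIntegrable_iff_integrableOn_Ioc_of_le zero_le_one]
  have h := (intervalIntegrable_iff_integrableOn_Ioc_of_le (a := (0:ℝ)) (b := 1)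
    zero_le_one).1 (intervalIntegrable_rpow' hr)
  exact h.congr_fun (fun x hx => by rw [abs_of_pos hx.1]) measurableSet_Ioc

lemma aux_int (h : ℝ → ℝ) (hh : ContinuousOn h (Icc 0 1)) :
    IntervalIntegrable (fun u : ℝ => |u| ^ (-(1:ℝ)/2) * h u) volume 0 1 :=
  (abs_rpow_int (by norm_num)).mul_continuousOn (by rwa [uIcc_of_le zero_le_one])

lemma aux_pos (h : ℝ → ℝ) (hh : ContinuousOn h (Icc 0 1))
    (hp : ∀ u ∈ Ioo (0:ℝ) 1, 0 < h u) :
    0 < ∫ u in (0:ℝ)..1, |u| ^ (-(1:ℝ)/2) * h u :=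
  intervalIntegral_pos_of_pos_on (aux_int h hh)
    (fun u hu => mul_pos (Real.rpow_pos_of_pos (abs_pos.2 (ne_of_gt hu.1)) _) (hp u hu))
    zero_lt_one

lemma contOn (φ : ℝ → ℝ) (hφ : Continuous φ) (A' : ℝ)
    (h : ∀ u ∈ Icc (0:ℝ) 1, φ u ≠ 0) :
    ContinuousOn (fun u : ℝ => |φ u| ^ (-A')) (Icc 0 1) :=
  ContinuousOn.rpow_const (hφ.abs.continuousOn)
    (fun x hx => Or.inl (abs_ne_zero.2 (h x hx)))

noncomputable def Gfun (γ d : ℝ) : ℝ :=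
  ∫ u in (0:ℝ)..1, |u| ^ (-(1:ℝ)/2) * |1 - d * u| ^ (-(γ/(γ+1)))

noncomputable def Kfun (γ ρ d : ℝ) : ℝ :=
  ∫ u in (0:ℝ)..1, |u| ^ (-(1:ℝ)/2) * |ρ + d * u| ^ (-(γ/(γ+1)))

lemma Gcont (γ d : ℝ) (hd0 : 0 ≤ d) (hd1 : d < 1) :
    ContinuousOn (fun u : ℝ => |1 - d * u| ^ (-(γ/(γ+1)))) (Icc 0 1) :=
  contOn (fun u => 1 - d * u) (by continuity) _
    (fun u hu => ne_of_gt (show (0:ℝ) < 1 - d * u by nlinarith [mul_le_mul_of_nonneg_left hu.2 hd0]))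

lemma Kcont (γ ρ d : ℝ) (hρ : 0 < ρ) (hd : 0 ≤ d) :
    ContinuousOn (fun u : ℝ => |ρ + d * u| ^ (-(γ/(γ+1)))) (Icc 0 1) :=
  contOn (fun u => ρ + d * u) (by continuity) _
    (fun u hu => ne_of_gt (show (0:ℝ) < ρ + d * u by nlinarith [mul_nonneg hd hu.1]))

lemma Gint (γ d : ℝ) (hd0 : 0 ≤ d) (hd1 : d < 1) :
    IntervalIntegrable
      (fun u : ℝ => |u| ^ (-(1:ℝ)/2) * |1 - d * u| ^ (-(γ/(γ+1)))) volume 0 1 :=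
  aux_int _ (Gcont γ d hd0 hd1)

lemma Kint (γ ρ d : ℝ) (hρ : 0 < ρ) (hd : 0 ≤ d) :
    IntervalIntegrable
      (fun u : ℝ => |u| ^ (-(1:ℝ)/2) * |ρ + d * u| ^ (-(γ/(γ+1)))) volume 0 1 :=
  aux_int _ (Kcont γ ρ d hρ hd)

lemma Gpos (γ d : ℝ) (hd0 : 0 ≤ d) (hd1 : d < 1) : 0 < Gfun γ d :=
  aux_pos _ (Gcont γ d hd0 hd1) (fun u hu =>
    Real.rpow_pos_of_pos (abs_pos.2 (ne_of_gt
      (by nlinarith [mul_le_mul_of_nonneg_left hu.2.le hd0]))) _)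

lemma Kpos (γ ρ d : ℝ) (hρ : 0 < ρ) (hd : 0 ≤ d) : 0 < Kfun γ ρ d :=
  aux_pos _ (Kcont γ ρ d hρ hd) (fun u hu =>
    Real.rpow_pos_of_pos (abs_pos.2 (ne_of_gt (by nlinarith [mul_nonneg hd hu.1.le]))) _)

lemma GK_step (γ ρ₁ ρ₂ d₁ d₂ : ℝ) (hγ : 1 < γ)
    (hρ₁ : 0 < ρ₁) (hlt : ρ₁ < ρ₂)
    (hd₁0 : 0 ≤ d₁) (hd₁1 : d₁ < 1) (hd₂0 : 0 ≤ d₂) (hd₂1 : d₂ < 1)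
    (hid : ∀ u : ℝ, (1+ρ₁)*(ρ₂+d₂*u) - (1+ρ₂)*(ρ₁+d₁*u) = (ρ₂-ρ₁)*(1-u))
    (hid2 : ∀ u : ℝ, (1+ρ₂)*(1-d₁*u) - (1+ρ₁)*(1-d₂*u) = (ρ₂-ρ₁)*(1-u)) :
    Gfun γ d₁ * Kfun γ ρ₂ d₂ < Gfun γ d₂ * Kfun γ ρ₁ d₁ := by
  have hρ₂ : 0 < ρ₂ := lt_trans hρ₁ hlt
  have hA0 : 0 < γ/(γ+1) := by positivity
  have h1ρ₁ : (0:ℝ) < 1 + ρ₁ := by linarith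
  have h1ρ₂ : (0:ℝ) < 1 + ρ₂ := by linarith
  set M : ℝ := ((1+ρ₂)/(1+ρ₁)) ^ (-(γ/(γ+1))) with hM
  have hMpos : 0 < M := Real.rpow_pos_of_pos (by positivity) _
  -- the strict inequality for G
  have hG : M * Gfun γ d₁ < Gfun γ d₂ := by
    have hsub : Gfun γ d₂ - M * Gfun γ d₁ =
        ∫ u in (0:ℝ)..1,
          (|u| ^ (-(1:ℝ)/2) * |1 - d₂ * u| ^ (-(γ/(γ+1)))
            - M * (|u| ^ (-(1:ℝ)/2) * |1 - d₁ * u| ^ (-(γ/(γ+1))))) := by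
      rw [integral_sub (Gint γ d₂ hd₂0 hd₂1) ((Gint γ d₁ hd₁0 hd₁1).const_mul M),
        intervalIntegral.integral_const_mul]
      rfl
    have hpos : 0 < Gfun γ d₂ - M * Gfun γ d₁ := by
      rw [hsub]
      apply intervalIntegral_pos_of_pos_on
        ((Gint γ d₂ hd₂0 hd₂1).sub ((Gint γ d₁ hd₁0 hd₁1).const_mul M))
      · intro u hu
        have hu0 : 0 < u := hu.1
        have hu1 : u < 1 := hu.2
        have hb₁ : (0:ℝ) < 1 - d₁ * u := by nlinarith
        have hb₂ : (0:ℝ) < 1 - d₂ * u := by nlinarith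
        have habs : (0:ℝ) < |u| ^ (-(1:ℝ)/2) :=
          Real.rpow_pos_of_pos (abs_pos.2 (ne_of_gt hu0)) _
        have inner : M * |1 - d₁ * u| ^ (-(γ/(γ+1))) < |1 - d₂ * u| ^ (-(γ/(γ+1))) := by
          rw [abs_of_pos hb₁, abs_of_pos hb₂, hM,
            ← Real.mul_rpow (by positivity) hb₁.le]
          apply Real.rpow_lt_rpow_of_neg hb₂ _ (by linarith)
          rw [div_mul_eq_mul_div, lt_div_iff₀ h1ρ₁]
          nlinarith [hid2 u]
        nlinarith [mul_lt_mul_of_pos_left inner habs]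
      · exact zero_lt_one
    linarith
  -- the weak inequality for K
  have hK : Kfun γ ρ₂ d₂ ≤ M * Kfun γ ρ₁ d₁ := by
    rw [Kfun, Kfun, ← intervalIntegral.integral_const_mul]
    apply integral_mono_on zero_le_one (Kint γ ρ₂ d₂ hρ₂ hd₂0)
      ((Kint γ ρ₁ d₁ hρ₁ hd₁0).const_mul M)
    intro u hu
    have hb₁ : (0:ℝ) < ρ₁ + d₁ * u := by nlinarith [mul_nonneg hd₁0 hu.1]
    have hb₂ : (0:ℝ) < ρ₂ + d₂ * u := by nlinarith [mul_nonneg hd₂0 hu.1]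
    have inner : |ρ₂ + d₂ * u| ^ (-(γ/(γ+1))) ≤ M * |ρ₁ + d₁ * u| ^ (-(γ/(γ+1))) := by
      rw [abs_of_pos hb₁, abs_of_pos hb₂, hM, ← Real.mul_rpow (by positivity) hb₁.le]
      apply Real.rpow_le_rpow_of_nonpos (by positivity) _ (by linarith)
      rw [div_mul_eq_mul_div, div_le_iff₀ h1ρ₁]
      nlinarith [hid u, mul_nonneg (by linarith : (0:ℝ) ≤ ρ₂ - ρ₁) (by linarith [hu.2] : (0:ℝ) ≤ 1 - u)]
    calc |u| ^ (-(1:ℝ)/2) * |ρ₂ + d₂ * u| ^ (-(γ/(γ+1)))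
        ≤ |u| ^ (-(1:ℝ)/2) * (M * |ρ₁ + d₁ * u| ^ (-(γ/(γ+1)))) :=
          mul_le_mul_of_nonneg_left inner (Real.rpow_nonneg (abs_nonneg u) _)
      _ = M * (|u| ^ (-(1:ℝ)/2) * |ρ₁ + d₁ * u| ^ (-(γ/(γ+1)))) := by ring
  have hGpos : 0 < Gfun γ d₁ := Gpos γ d₁ hd₁0 hd₁1
  have hKpos : 0 < Kfun γ ρ₁ d₁ := Kpos γ ρ₁ d₁ hρ₁ hd₁0
  calc Gfun γ d₁ * Kfun γ ρ₂ d₂ ≤ Gfun γ d₁ * (M * Kfun γ ρ₁ d₁) :=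
        mul_le_mul_of_nonneg_left hK hGpos.le
    _ = (M * Gfun γ d₁) * Kfun γ ρ₁ d₁ := by ring
    _ < Gfun γ d₂ * Kfun γ ρ₁ d₁ := mul_lt_mul_of_pos_right hG hKpos

lemma reduce (ap am γ : ℝ) (hap : 0 < ap) (ham : 0 < am) (hγ : 1 < γ)
    (ρ : ℝ) (hρ : 0 < ρ) (hρ' : ρ < am / ap) :
    ρ ^ ((γ - 1) / (2 * (γ + 1))) *
      ((∫ ξ in (ap * (ρ + 1) / (ap + am))..1,
          |ap - ap * ξ| ^ (-(1 : ℝ) / 2) * |ξ| ^ (-(γ / (γ + 1)))) /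
       (∫ ξ in (ap / am)..(ap / (ap + am) * ((ρ + 1) / ρ)),
          |am * ξ - ap| ^ (-(1 : ℝ) / 2) * |ξ| ^ (-(γ / (γ + 1))))) =
    (am / ap) ^ (1 - γ / (γ + 1)) *
      (Gfun γ ((am - ap * ρ) / (ap + am)) / Kfun γ ρ ((am - ap * ρ) / (ap + am))) := by
  have hs : (0:ℝ) < ap + am := by linarith
  set d : ℝ := (am - ap * ρ) / (ap + am) with hdd
  have hd0 : 0 < d := by
    apply div_pos _ hs
    rw [lt_div_iff₀ hap] at hρ'
    linarith
  have hd1 : d < 1 := by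
    rw [hdd, div_lt_one hs]
    nlinarith
  set w : ℝ := ap * d / (am * ρ) with hw
  have hw0 : 0 < w := by positivity
  -- substitution for I₁
  have e0 : d * 0 + (1 - d) = ap * (ρ + 1) / (ap + am) := by
    rw [hdd]; field_simp; ring
  have e1 : d * 1 + (1 - d) = (1:ℝ) := by ring
  have hsub₁ := smul_integral_comp_mul_add (a := (0:ℝ)) (b := 1)
    (fun ξ : ℝ => |ap - ap * ξ| ^ (-(1 : ℝ) / 2) * |ξ| ^ (-(γ / (γ + 1)))) d (1 - d)
  rw [e0, e1] at hsub₁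
  have hcgA : ∫ u in (0:ℝ)..1,
      (fun ξ : ℝ => |ap - ap * ξ| ^ (-(1 : ℝ) / 2) * |ξ| ^ (-(γ / (γ + 1)))) (d * u + (1 - d))
      = ∫ u in (0:ℝ)..1, (ap * d) ^ (-(1:ℝ)/2) *
          ((fun v : ℝ => |v| ^ (-(1:ℝ)/2) * |1 - d * v| ^ (-(γ/(γ+1)))) (1 - u)) := by
    apply intervalIntegral.integral_congr
    intro u _
    simp only []
    have h1 : ap - ap * (d * u + (1 - d)) = (ap * d) * (1 - u) := by ring
    have h2 : d * u + (1 - d) = 1 - d * (1 - u) := by ring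
    rw [h1, h2, abs_mul, abs_of_pos (mul_pos hap hd0),
      Real.mul_rpow (mul_pos hap hd0).le (abs_nonneg _)]
    ring
  have step1 : (∫ ξ in (ap * (ρ + 1) / (ap + am))..1,
      |ap - ap * ξ| ^ (-(1 : ℝ) / 2) * |ξ| ^ (-(γ / (γ + 1)))) =
      d * ((ap * d) ^ (-(1:ℝ)/2) * Gfun γ d) := by
    rw [← hsub₁, smul_eq_mul, hcgA, intervalIntegral.integral_const_mul,
      integral_comp_sub_left (fun v : ℝ => |v| ^ (-(1:ℝ)/2) * |1 - d * v| ^ (-(γ/(γ+1)))) 1]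
    norm_num [Gfun]
  -- substitution for I₂
  have e2 : w * 0 + ap / am = ap / am := by ring
  have e3 : w * 1 + ap / am = ap / (ap + am) * ((ρ + 1) / ρ) := by
    rw [hw, hdd]; field_simp; ring
  have hsub₂ := smul_integral_comp_mul_add (a := (0:ℝ)) (b := 1)
    (fun ξ : ℝ => |am * ξ - ap| ^ (-(1 : ℝ) / 2) * |ξ| ^ (-(γ / (γ + 1)))) w (ap / am)
  rw [e2, e3] at hsub₂
  have hcgB : ∫ u in (0:ℝ)..1,
      (fun ξ : ℝ => |am * ξ - ap| ^ (-(1 : ℝ) / 2) * |ξ| ^ (-(γ / (γ + 1)))) (w * u + ap / am)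
      = ∫ u in (0:ℝ)..1, ((am * w) ^ (-(1:ℝ)/2) * (ap / (am * ρ)) ^ (-(γ/(γ+1)))) *
          (|u| ^ (-(1:ℝ)/2) * |ρ + d * u| ^ (-(γ/(γ+1)))) := by
    apply intervalIntegral.integral_congr
    intro u _
    simp only []
    have h1 : am * (w * u + ap / am) - ap = (am * w) * u := by
      field_simp; ring
    have h2 : w * u + ap / am = (ap / (am * ρ)) * (ρ + d * u) := by
      rw [hw]; field_simp; ring
    rw [h1, h2, abs_mul (am * w) u, abs_mul (ap / (am * ρ)) (ρ + d * u),
      abs_of_pos (mul_pos ham hw0),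
      abs_of_pos (show (0:ℝ) < ap/(am*ρ) by positivity),
      Real.mul_rpow (mul_pos ham hw0).le (abs_nonneg _),
      Real.mul_rpow (show (0:ℝ) ≤ ap/(am*ρ) by positivity) (abs_nonneg _)]
    ring
  have step2 : (∫ ξ in (ap / am)..(ap / (ap + am) * ((ρ + 1) / ρ)),
      |am * ξ - ap| ^ (-(1 : ℝ) / 2) * |ξ| ^ (-(γ / (γ + 1)))) =
      w * (((am * w) ^ (-(1:ℝ)/2) * (ap / (am * ρ)) ^ (-(γ/(γ+1)))) * Kfun γ ρ d) := by
    rw [← hsub₂, smul_eq_mul, hcgB, intervalIntegral.integral_const_mul]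
    rfl
  -- the scalar identity
  have hγ1 : (0:ℝ) < γ + 1 := by linarith
  have hBA : (γ - 1) / (2 * (γ + 1)) = γ/(γ+1) - 1/2 := by
    field_simp; ring
  have key : ρ ^ ((γ - 1) / (2 * (γ + 1))) * (d * (ap * d) ^ (-(1:ℝ)/2)) =
      (am / ap) ^ (1 - γ/(γ+1)) *
        (w * ((am * w) ^ (-(1:ℝ)/2) * (ap / (am * ρ)) ^ (-(γ/(γ+1))))) := by
    have hL : 0 < ρ ^ ((γ - 1) / (2 * (γ + 1))) * (d * (ap * d) ^ (-(1:ℝ)/2)) := by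
      positivity
    have hR : 0 < (am / ap) ^ (1 - γ/(γ+1)) *
        (w * ((am * w) ^ (-(1:ℝ)/2) * (ap / (am * ρ)) ^ (-(γ/(γ+1))))) := by
      positivity
    apply Real.log_injOn_pos (mem_Ioi.2 hL) (mem_Ioi.2 hR)
    have l1 : Real.log (ap * d) = Real.log ap + Real.log d :=
      Real.log_mul (ne_of_gt hap) (ne_of_gt hd0)
    have l2 : Real.log w = Real.log ap + Real.log d - (Real.log am + Real.log ρ) := by
      rw [hw, Real.log_div (by positivity) (by positivity),
        Real.log_mul (ne_of_gt hap) (ne_of_gt hd0),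
        Real.log_mul (ne_of_gt ham) (ne_of_gt hρ)]
    have l3 : Real.log (am * w) = Real.log am + Real.log w :=
      Real.log_mul (ne_of_gt ham) (ne_of_gt hw0)
    have l4 : Real.log (ap / (am * ρ)) = Real.log ap - (Real.log am + Real.log ρ) := by
      rw [Real.log_div (by positivity) (by positivity),
        Real.log_mul (ne_of_gt ham) (ne_of_gt hρ)]
    have l5 : Real.log (am / ap) = Real.log am - Real.log ap :=
      Real.log_div (ne_of_gt ham) (ne_of_gt hap)
    rw [Real.log_mul (by positivity) (by positivity),
      Real.log_mul (by positivity) (by positivity),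
      Real.log_mul (by positivity) (by positivity),
      Real.log_mul (by positivity) (by positivity),
      Real.log_mul (by positivity) (by positivity),
      Real.log_rpow hρ, Real.log_rpow (by positivity), Real.log_rpow (by positivity),
      Real.log_rpow (by positivity), Real.log_rpow (by positivity),
      l1, l3, l2, l4, l5, hBA]
    ring
  -- conclude
  rw [step1, step2]
  have h3 : w * ((am * w) ^ (-(1:ℝ)/2) * (ap / (am * ρ)) ^ (-(γ/(γ+1)))) ≠ 0 := by
    positivity
  have h4 : Kfun γ ρ d ≠ 0 := ne_of_gt (Kpos γ ρ d hρ hd0.le)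
  have expand : ρ ^ ((γ - 1) / (2 * (γ + 1))) *
      (d * ((ap * d) ^ (-(1:ℝ)/2) * Gfun γ d) /
        (w * (((am * w) ^ (-(1:ℝ)/2) * (ap / (am * ρ)) ^ (-(γ/(γ+1)))) * Kfun γ ρ d))) =
      (ρ ^ ((γ - 1) / (2 * (γ + 1))) * (d * (ap * d) ^ (-(1:ℝ)/2))) * Gfun γ d /
        ((w * ((am * w) ^ (-(1:ℝ)/2) * (ap / (am * ρ)) ^ (-(γ/(γ+1))))) * Kfun γ ρ d) := by
    ring
  rw [expand, key]
  field_simp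

theorem stmt_3 (ap am γ : ℝ) (hap : 0 < ap) (ham : 0 < am) (hγ : 1 < γ)
    (I₁ I₂ F₂ : ℝ → ℝ)
    (hI₁ : ∀ ρ : ℝ, I₁ ρ =
      ∫ ξ in (ap * (ρ + 1) / (ap + am))..1,
        |ap - ap * ξ| ^ (-(1 : ℝ) / 2) * |ξ| ^ (-(γ / (γ + 1))))
    (hI₂ : ∀ ρ : ℝ, I₂ ρ =
      ∫ ξ in (ap / am)..(ap / (ap + am) * ((ρ + 1) / ρ)),
        |am * ξ - ap| ^ (-(1 : ℝ) / 2) * |ξ| ^ (-(γ / (γ + 1))))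
    (hF₂ : ∀ ρ : ℝ, F₂ ρ = ρ ^ ((γ - 1) / (2 * (γ + 1))) * (I₁ ρ / I₂ ρ)) :
    StrictMonoOn F₂ (Ioo 0 (am / ap)) := by
  intro x hx y hy hxy
  have hs : (0:ℝ) < ap + am := by linarith
  obtain ⟨hx0, hx1⟩ := hx
  obtain ⟨hy0, hy1⟩ := hy
  rw [hF₂ x, hF₂ y, hI₁ x, hI₂ x, hI₁ y, hI₂ y,
    reduce ap am γ hap ham hγ x hx0 hx1, reduce ap am γ hap ham hγ y hy0 hy1]
  set dx : ℝ := (am - ap * x) / (ap + am) with hdx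
  set dy : ℝ := (am - ap * y) / (ap + am) with hdy
  have hxam : x * ap < am := by rw [lt_div_iff₀ hap] at hx1; linarith
  have hyam : y * ap < am := by rw [lt_div_iff₀ hap] at hy1; linarith
  have hdx0 : 0 < dx := div_pos (by linarith) hs
  have hdy0 : 0 < dy := div_pos (by linarith) hs
  have hdx1 : dx < 1 := by rw [hdx, div_lt_one hs]; nlinarith
  have hdy1 : dy < 1 := by rw [hdy, div_lt_one hs]; nlinarith
  apply mul_lt_mul_of_pos_left _ (Real.rpow_pos_of_pos (by positivity) _)
  rw [div_lt_div_iff₀ (Kpos γ x dx hx0 hdx0.le) (Kpos γ y dy hy0 hdy0.le)]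
  exact GK_step γ x y dx dy hγ hx0 hxy hdx0.le hdx1 hdy0.le hdy1
    (fun u => by rw [hdx, hdy]; field_simp; ring)
    (fun u => by rw [hdx, hdy]; field_simp; ring)
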